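/- Higman's lemma for a finite alphabet: for every infinite sequence w₁, w₂, … of finite words over a finite alphabet, there exist indices i < j such that w_i embeds into w_j (w_i is obtained from w_j by deleting some letters). -/

import Mathlib

/-- Higman's lemma for a finite alphabet: for every infinite
sequence `w₁, w₂, …` of finite words over a finite alphabet `A`, there are
indices `i < j` such that `w i` embeds into `w j`, i.e. `w i` is a (not
necessarily contiguous) subsequence of `w j`. -/
theorem stmt10 {A : Type*} [Finite A] (w : ℕ → List A) :
    ∃ i j, i < j ∧ (w i).Sublist (w j) := by
  have hs : (Set.univ : Set A).PartiallyWellOrderedOn (· = ·) :=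
    Set.Finite.partiallyWellOrderedOn (Set.finite_univ) (r := (· = ·))
  have h := hs.partiallyWellOrderedOn_sublistForall₂ (· = ·)
  obtain ⟨i, j, hij, h⟩ := h (fun n => ⟨w n, fun x _ => Set.mem_univ x⟩)
  obtain ⟨l, hf, hl⟩ := List.sublistForall₂_iff.mp h
  have : w i = l := by
    rw [← List.forall₂_eq_eq_eq]; exact hf
  exact ⟨i, j, hij, this ▸ hl⟩
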